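/- Let n ≥ 2, let η be an increasing homeomorphism of [0,∞) onto itself, and let c > 1. Then there exists k > 1, depending only on η and c, with the following property. Let Ω, Ω' be domains in ℝ^n with Ω ≠ ℝ^n and Ω' ≠ ℝ^n, and let f : Ω → Ω' be a homeomorphism such that f is η-quasisymmetric on every closed ball B(z,ρ) ⊆ Ω satisfying B(z,2ρ) ⊆ Ω. Then for every closed ball B = B(x,R) ⊆ Ω with diam(B) ≤ (1/k)·dist(B, ∂Ω), there exists a closed ball B' = B(f(x), R') ⊆ Ω' such that diam(B') ≤ (1/c)·dist(B', ∂Ω') and f(B) ⊆ B' ⊆ 2B' ⊆ f(kB). -/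

import Mathlib

open Set Metric
open scoped ENNReal

noncomputable section

/-- Covering number: the smallest number of sets of diameter at most `r` needed to
cover `F` (`∞` if no finite such cover exists). -/
def coverN {X : Type*} [PseudoMetricSpace X] (F : Set X) (r : ℝ) : ℝ≥0∞ :=
  sInf {m : ℝ≥0∞ | ∃ 𝒰 : Finset (Set X), (𝒰.card : ℝ≥0∞) = m ∧
    (∀ U ∈ 𝒰, EMetric.diam U ≤ ENNReal.ofReal r) ∧ F ⊆ ⋃ U ∈ 𝒰, U}

/-- Regularized Assouad spectrum `dim_{A,reg}^θ(F)`. -/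
def dimAreg {X : Type*} [PseudoMetricSpace X] (θ : ℝ) (F : Set X) : ℝ :=
  sInf {α : ℝ | 0 < α ∧ ∃ C : ℝ, 0 < C ∧ ∀ x ∈ F, ∀ r R : ℝ,
    0 < r → r ≤ R ^ (1/θ) → R ^ (1/θ) < R → R < 1 →
    coverN (closedBall x R ∩ F) r ≤ ENNReal.ofReal (C * (R/r) ^ α)}

/-- (Unregularized) Assouad spectrum `dim_A^θ(F)`. -/
def dimAspec {X : Type*} [PseudoMetricSpace X] (θ : ℝ) (F : Set X) : ℝ :=
  sInf {α : ℝ | 0 < α ∧ ∃ C : ℝ, 0 < C ∧ ∀ x ∈ F, ∀ R : ℝ, 0 < R → R < 1 →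
    coverN (closedBall x R ∩ F) (R ^ (1/θ)) ≤ ENNReal.ofReal (C * (R / R ^ (1/θ)) ^ α)}

/-- Upper box-counting dimension of a (bounded) set. -/
def dimBupper {X : Type*} [PseudoMetricSpace X] (F : Set X) : ℝ :=
  sInf {α : ℝ | 0 < α ∧ ∃ C : ℝ, 0 < C ∧ ∀ r : ℝ, 0 < r → r ≤ diam F →
    coverN F r ≤ ENNReal.ofReal (C * r ^ (-α))}

/-- Assouad dimension. -/
def dimA {X : Type*} [PseudoMetricSpace X] (F : Set X) : ℝ :=
  sInf {α : ℝ | 0 < α ∧ ∃ C : ℝ, 0 < C ∧ ∀ x ∈ F, ∀ r R : ℝ, 0 < r → r ≤ R →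
    coverN (closedBall x R ∩ F) r ≤ ENNReal.ofReal (C * (R/r) ^ α)}

/-- Quasi-Assouad dimension: `sup_{0<θ<1} dim_{A,reg}^θ(F)`. -/
def dimqA {X : Type*} [PseudoMetricSpace X] (F : Set X) : ℝ :=
  sSup ((fun θ => dimAreg θ F) '' Ioo (0:ℝ) 1)

open Classical in
/-- Phase-transition parameter `ρ(F)`. -/
def rhoPT {X : Type*} [PseudoMetricSpace X] (F : Set X) : ℝ :=
  if ∃ θ ∈ Ioo (0:ℝ) 1, dimAreg θ F = dimqA F
  then sInf {θ | θ ∈ Ioo (0:ℝ) 1 ∧ dimAreg θ F = dimqA F}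
  else 1

/-- The axes-parallel cube `Q(x,R) = ∏ [xᵢ - R, xᵢ + R]`. -/
def cubeQ {n : ℕ} (x : EuclideanSpace ℝ (Fin n)) (R : ℝ) : Set (EuclideanSpace ℝ (Fin n)) :=
  {y | ∀ i, x i - R ≤ y i ∧ y i ≤ x i + R}

/-- The generation-`m` dyadic subcube of `Q(x,R)` with index `k`. -/
def dyadicCube {n : ℕ} (x : EuclideanSpace ℝ (Fin n)) (R : ℝ) (m : ℕ)
    (k : Fin n → Fin (2 ^ m)) : Set (EuclideanSpace ℝ (Fin n)) :=
  {y | ∀ i, x i - R + (k i : ℝ) * (2 * R / 2 ^ m) ≤ y i ∧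
        y i ≤ x i - R + ((k i : ℝ) + 1) * (2 * R / 2 ^ m)}

/-- `N_d(B(x,R) ∩ F, m)`: the number of generation-`m` dyadic subcubes of `Q(x,R)`
that intersect `B(x,R) ∩ F`. -/
def Nd {n : ℕ} (x : EuclideanSpace ℝ (Fin n)) (R : ℝ)
    (F : Set (EuclideanSpace ℝ (Fin n))) (m : ℕ) : ℕ :=
  Nat.card {k : Fin n → Fin (2 ^ m) // (dyadicCube x R m k ∩ (closedBall x R ∩ F)).Nonempty}

/-- `f` is `η`-quasisymmetric on the set `S`. -/
def QSOn {X Y : Type*} [PseudoMetricSpace X] [PseudoMetricSpace Y]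
    (η : ℝ → ℝ) (f : X → Y) (S : Set X) : Prop :=
  ∀ x ∈ S, ∀ y ∈ S, ∀ z ∈ S, x ≠ z →
    dist (f x) (f y) ≤ η (dist x y / dist x z) * dist (f x) (f z)

/-- Distance between two sets. -/
def setDist {X : Type*} [PseudoMetricSpace X] (A B : Set X) : ℝ :=
  sInf {d : ℝ | ∃ a ∈ A, ∃ b ∈ B, d = dist a b}

end

section helpers
variable {X : Type*} [TopologicalSpace X]

lemma my_frontier_hit {s t : Set X} (hs : IsPreconnected s)
    (h1 : (s ∩ t).Nonempty) (h2 : (s \ t).Nonempty) : (s ∩ frontier t).Nonempty := by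
  by_contra h
  rw [not_nonempty_iff_eq_empty] at h
  have hsub : s ⊆ interior t ∪ (closure t)ᶜ := by
    intro p hp
    have hpf : p ∉ frontier t := fun hf => (eq_empty_iff_forall_notMem.mp h p) ⟨hp, hf⟩
    by_cases hc : p ∈ closure t
    · left
      rcases (em (p ∈ interior t)) with hi | hi
      · exact hi
      · exact absurd ⟨hc, hi⟩ hpf
    · right; exact hc
  have hdisj : Disjoint (interior t) ((closure t)ᶜ) := by
    rw [Set.disjoint_iff]
    intro p ⟨hp1, hp2⟩
    exact hp2 (subset_closure (interior_subset hp1))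
  rcases hs.subset_or_subset isOpen_interior (isClosed_closure.isOpen_compl) hdisj hsub with
    hsu | hsu
  · obtain ⟨p, hps, hpt⟩ := h2
    exact hpt (interior_subset (hsu hps))
  · obtain ⟨p, hps, hpt⟩ := h1
    exact (hsu hps) (subset_closure hpt)

end helpers


set_option maxHeartbeats 1000000 in
theorem stmt3 {n : ℕ} (hn : 2 ≤ n) (η : ℝ → ℝ)
    (hη_mono : StrictMonoOn η (Ici (0:ℝ)))
    (hη_cont : ContinuousOn η (Ici (0:ℝ)))
    (hη_bij : Set.BijOn η (Ici (0:ℝ)) (Ici (0:ℝ)))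
    (c : ℝ) (hc : 1 < c) :
    ∃ k : ℝ, 1 < k ∧
      ∀ (Ω Ω' : Set (EuclideanSpace ℝ (Fin n)))
        (f : EuclideanSpace ℝ (Fin n) → EuclideanSpace ℝ (Fin n)),
        IsOpen Ω → IsConnected Ω → Ω ≠ univ →
        IsOpen Ω' → IsConnected Ω' → Ω' ≠ univ →
        Set.BijOn f Ω Ω' → ContinuousOn f Ω →
        (∀ U ⊆ Ω, IsOpen U → IsOpen (f '' U)) →
        (∀ z ρ, 0 < ρ → closedBall z ρ ⊆ Ω → closedBall z (2 * ρ) ⊆ Ω →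
          QSOn η f (closedBall z ρ)) →
        ∀ x R, 0 < R → closedBall x R ⊆ Ω →
          diam (closedBall x R) ≤ (1 / k) * setDist (closedBall x R) (frontier Ω) →
          ∃ R' : ℝ, 0 < R' ∧ closedBall (f x) R' ⊆ Ω' ∧
            diam (closedBall (f x) R')
              ≤ (1 / c) * setDist (closedBall (f x) R') (frontier Ω') ∧
            f '' closedBall x R ⊆ closedBall (f x) R' ∧
            closedBall (f x) (2 * R') ⊆ f '' closedBall x (k * R) := by
  haveI : Nonempty (Fin n) := ⟨⟨0, by omega⟩⟩
  haveI : Nontrivial (EuclideanSpace ℝ (Fin n)) := by infer_instance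
  -- η 0 = 0
  have hη0 : η 0 = 0 := by
    by_contra h0
    have hmem : η 0 ∈ Ici (0:ℝ) := hη_bij.mapsTo (le_refl (0:ℝ))
    have hpos : 0 < η 0 := lt_of_le_of_ne hmem (Ne.symm h0)
    obtain ⟨t, ht0, htv⟩ := hη_bij.surjOn (show η 0 / 2 ∈ Ici (0:ℝ) from by
      simp only [mem_Ici]; linarith)
    have : η 0 ≤ η t := hη_mono.monotoneOn (self_mem_Ici) ht0 ht0
    rw [htv] at this; linarith
  -- choose t with η t = v
  set v : ℝ := min (1 / (2 * c + 2)) (1 / 4) with hv_def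
  have hv_pos : 0 < v := by
    apply lt_min <;> positivity
  obtain ⟨t, ht_mem, ht_eq⟩ := hη_bij.surjOn (show v ∈ Ici (0:ℝ) from le_of_lt hv_pos)
  have ht_pos : 0 < t := by
    rcases lt_or_eq_of_le (mem_Ici.mp ht_mem) with h | h
    · exact h
    · exfalso; rw [← h, hη0] at ht_eq; linarith
  refine ⟨max 2 (2 / t), lt_of_lt_of_le one_lt_two (le_max_left _ _), ?_⟩
  set k : ℝ := max 2 (2 / t) with hk_def
  have hk2 : (2:ℝ) ≤ k := le_max_left _ _
  have hk_pos : 0 < k := lt_of_lt_of_le two_pos hk2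
  have hkt : 2 / k ≤ t := by
    rw [div_le_iff₀ hk_pos]
    calc (2:ℝ) = (2 / t) * t := by field_simp
    _ ≤ k * t := by
      apply mul_le_mul_of_nonneg_right (le_max_right _ _) ht_pos.le
    _ = t * k := mul_comm _ _
  intro Ω Ω' f hΩo hΩc hΩne hΩ'o hΩ'c hΩ'ne hbij hcont hopen hqs x R hR hBsub hdiam
  have hx : x ∈ Ω := hBsub (mem_closedBall_self hR.le)
  set d' : ℝ := setDist (closedBall x R) (frontier Ω) with hd'_def
  -- diam lower bound: 2R ≤ diam closedBall x R
  have hdlow : 2 * R ≤ diam (closedBall x R) := by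
    have hsph1 : (sphere (0 : EuclideanSpace ℝ (Fin n)) 1).Nonempty :=
      NormedSpace.sphere_nonempty.mpr zero_le_one
    obtain ⟨w, hw⟩ := hsph1
    have hwn : ‖w‖ = 1 := by simpa using hw
    have hy1 : x + R • w ∈ closedBall x R := by
      simp [mem_closedBall, dist_eq_norm, norm_smul, hwn, abs_of_pos hR]
    have hy2 : x - R • w ∈ closedBall x R := by
      simp [mem_closedBall, dist_eq_norm, norm_smul, hwn, abs_of_pos hR]
    have hd : dist (x + R • w) (x - R • w) = 2 * R := by
      rw [dist_eq_norm]
      have : (x + R • w) - (x - R • w) = (2 * R) • w := by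
        rw [two_mul, add_smul]; abel
      rw [this, norm_smul, hwn, mul_one, Real.norm_eq_abs,
        abs_of_pos (by positivity : (0:ℝ) < 2 * R)]
    calc 2 * R = dist (x + R • w) (x - R • w) := hd.symm
    _ ≤ diam (closedBall x R) := dist_le_diam_of_mem isBounded_closedBall hy1 hy2
  have hd' : 2 * k * R ≤ d' := by
    have h1 : 2 * R ≤ (1 / k) * d' := le_trans hdlow hdiam
    have h2 : k * (2 * R) ≤ k * (1 / k * d') := mul_le_mul_of_nonneg_left h1 hk_pos.le
    have h3 : k * (1 / k * d') = d' := by field_simp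
    nlinarith
  have hkR_pos : 0 < k * R := mul_pos hk_pos hR
  -- closedBall x (kR) ⊆ Ω
  have hkR : closedBall x (k * R) ⊆ Ω := by
    intro y hy
    by_contra hyΩ
    have hsegsub : segment ℝ x y ⊆ closedBall x (dist x y) :=
      (convex_closedBall x (dist x y)).segment_subset (mem_closedBall_self dist_nonneg)
        (by simp [mem_closedBall, dist_comm])
    obtain ⟨p, hpseg, hpf⟩ := my_frontier_hit (convex_segment x y).isPreconnected
      ⟨x, left_mem_segment ℝ x y, hx⟩ ⟨y, right_mem_segment ℝ x y, hyΩ⟩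
    have hxp : dist x p ≤ k * R := by
      have h4 := hsegsub hpseg
      rw [mem_closedBall, dist_comm] at h4
      rw [mem_closedBall] at hy
      rw [dist_comm] at hy
      exact le_trans h4 hy
    have hle : d' ≤ dist x p := by
      apply csInf_le
      · exact ⟨0, fun d ⟨a, _, b, _, hd⟩ => hd ▸ dist_nonneg⟩
      · exact ⟨x, mem_closedBall_self hR.le, p, hpf, rfl⟩
    nlinarith
  -- set up s, sphere, QS
  set s : ℝ := k * R / 2 with hs_def
  have hs_pos : 0 < s := by positivity
  have hRs : R ≤ s := by rw [hs_def]; nlinarith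
  have hskR : s ≤ k * R := by rw [hs_def]; nlinarith
  have hcbs : closedBall x s ⊆ Ω :=
    le_trans (closedBall_subset_closedBall hskR) hkR
  have hQS : QSOn η f (closedBall x s) := by
    apply hqs x s hs_pos hcbs
    have : 2 * s = k * R := by rw [hs_def]; ring
    rw [this]; exact hkR
  have hSph : (sphere x s).Nonempty := NormedSpace.sphere_nonempty.mpr hs_pos.le
  have hSphΩ : sphere x s ⊆ Ω := le_trans sphere_subset_closedBall hcbs
  set K : Set (EuclideanSpace ℝ (Fin n)) := f '' sphere x s with hK_def
  have hKcomp : IsCompact K := (isCompact_sphere x s).image_of_continuousOn (hcont.mono hSphΩ)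
  have hKne : K.Nonempty := hSph.image f
  set m : ℝ := infDist (f x) K with hm_def
  have hfxK : f x ∉ K := by
    rintro ⟨z, hz, hfz⟩
    have : z = x := hbij.injOn (hSphΩ hz) hx hfz
    rw [mem_sphere] at hz
    rw [this] at hz
    simp at hz
    exact hs_pos.ne' hz.symm
  have hm_pos : 0 < m := by
    rcases lt_or_eq_of_le (infDist_nonneg : 0 ≤ m) with h | h
    · exact h
    · exact absurd ((hKcomp.isClosed.mem_iff_infDist_zero hKne).mpr h.symm) hfxK
  obtain ⟨p, hpK, hm_eq⟩ := hKcomp.exists_infDist_eq_dist hKne (f x)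
  obtain ⟨z, hz_sph, hz_eq⟩ := hpK
  -- the topological lemma: ball (f x) m ⊆ f '' ball x s
  have hball : ball (f x) m ⊆ f '' ball x s := by
    have hVopen : IsOpen (f '' ball x s) :=
      hopen _ (le_trans ball_subset_closedBall hcbs) isOpen_ball
    have hKc : IsCompact (f '' closedBall x s) :=
      (isCompact_closedBall x s).image_of_continuousOn (hcont.mono hcbs)
    have hcover : ball (f x) m ⊆ f '' ball x s ∪ (f '' closedBall x s)ᶜ := by
      intro q hq
      by_cases hqK : q ∈ f '' closedBall x s
      · obtain ⟨w, hw, rfl⟩ := hqK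
        rw [mem_closedBall] at hw
        rcases lt_or_eq_of_le hw with h | h
        · exact Or.inl ⟨w, mem_ball.mpr h, rfl⟩
        · exfalso
          have hwK : f w ∈ K := ⟨w, mem_sphere.mpr h, rfl⟩
          have := infDist_le_dist_of_mem hwK (x := f x)
          rw [mem_ball, dist_comm] at hq
          rw [← hm_def] at this
          linarith
      · exact Or.inr hqK
    have hdisj : Disjoint (f '' ball x s) ((f '' closedBall x s)ᶜ) := by
      rw [Set.disjoint_iff]
      rintro q ⟨hq1, hq2⟩
      exact hq2 (image_mono ball_subset_closedBall hq1)
    rcases (convex_ball (f x) m).isPreconnected.subset_or_subset hVopen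
        hKc.isClosed.isOpen_compl hdisj hcover with h | h
    · exact h
    · exfalso
      have hfx1 : f x ∈ ball (f x) m := mem_ball_self hm_pos
      have hfx2 : f x ∈ f '' closedBall x s := ⟨x, mem_closedBall_self hs_pos.le, rfl⟩
      exact (h hfx1) hfx2
  have hballΩ' : ball (f x) m ⊆ Ω' := by
    refine le_trans hball ?_
    rintro q ⟨w, hw, rfl⟩
    exact hbij.mapsTo (le_trans ball_subset_closedBall hcbs hw)
  -- far from frontier Ω'
  have hfar : ∀ b ∈ frontier Ω', m ≤ dist (f x) b := by
    intro b hb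
    by_contra hlt
    push_neg at hlt
    have : b ∈ Ω' := hballΩ' (by rwa [mem_ball, dist_comm])
    have hemp := hΩ'o.inter_frontier_eq
    exact (eq_empty_iff_forall_notMem.mp hemp b) ⟨this, hb⟩
  -- define ε, R'
  set ε : ℝ := η (2 / k) with hε_def
  have h2k_pos : 0 < 2 / k := by positivity
  have hε_pos : 0 < ε := by
    have := hη_mono self_mem_Ici (le_of_lt h2k_pos) h2k_pos
    rwa [hη0] at this
  have hε_le : ε ≤ v := by
    have := hη_mono.monotoneOn (le_of_lt h2k_pos) ht_mem hkt
    rwa [ht_eq] at this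
  have hε_le4 : ε ≤ 1 / 4 := le_trans hε_le (min_le_right _ _)
  have hε_lec : ε ≤ 1 / (2 * c + 2) := le_trans hε_le (min_le_left _ _)
  refine ⟨ε * m, mul_pos hε_pos hm_pos, ?_, ?_, ?_, ?_⟩
  · -- closedBall (f x) (ε m) ⊆ Ω'
    refine le_trans (closedBall_subset_ball ?_) hballΩ'
    nlinarith [hε_le4, hm_pos]
  · -- diam bound
    have hfront' : (frontier Ω').Nonempty :=
      nonempty_frontier_iff.mpr ⟨hΩ'c.nonempty, hΩ'ne⟩
    obtain ⟨b, hb⟩ := hfront'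
    have hsd : m - ε * m ≤ setDist (closedBall (f x) (ε * m)) (frontier Ω') := by
      apply le_csInf
      · exact ⟨dist (f x) b, f x, mem_closedBall_self (mul_pos hε_pos hm_pos).le, b, hb, rfl⟩
      · rintro d ⟨a, ha, b', hb', rfl⟩
        have h1 : m ≤ dist (f x) b' := hfar b' hb'
        have h2 : dist (f x) a ≤ ε * m := by rwa [mem_closedBall, dist_comm] at ha
        have h3 : dist (f x) b' ≤ dist (f x) a + dist a b' := dist_triangle _ _ _
        linarith
    have hdia : diam (closedBall (f x) (ε * m)) ≤ 2 * (ε * m) :=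
      diam_closedBall (mul_pos hε_pos hm_pos).le
    have hεc : ε * (2 * c + 2) ≤ 1 := by
      rw [← le_div_iff₀ (by linarith : (0:ℝ) < 2 * c + 2)]
      exact hε_lec
    have hineq : 2 * (ε * m) ≤ (1 / c) * (m - ε * m) := by
      rw [div_mul_eq_mul_div, le_div_iff₀ (by linarith : (0:ℝ) < c)]
      nlinarith [mul_nonneg hm_pos.le (by linarith : (0:ℝ) ≤ 1 - ε * (2 * c + 2)),
        mul_nonneg hm_pos.le hε_pos.le]
    calc diam (closedBall (f x) (ε * m)) ≤ 2 * (ε * m) := hdia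
    _ ≤ (1 / c) * (m - ε * m) := hineq
    _ ≤ (1 / c) * setDist (closedBall (f x) (ε * m)) (frontier Ω') := by
        apply mul_le_mul_of_nonneg_left hsd (by positivity)
  · -- f '' closedBall x R ⊆ closedBall (f x) (ε m)
    rintro q ⟨y, hy, rfl⟩
    have hxz : x ≠ z := by
      intro h
      rw [mem_sphere, ← h] at hz_sph
      simp at hz_sph
      exact hs_pos.ne' hz_sph.symm
    have hxz_dist : dist x z = s := by
      rw [dist_comm]; exact hz_sph
    have hQSa := hQS x (mem_closedBall_self hs_pos.le) y
      (closedBall_subset_closedBall hRs hy) z (sphere_subset_closedBall hz_sph) hxz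
    rw [hxz_dist] at hQSa
    have hdxy : dist x y ≤ R := by rw [dist_comm]; exact hy
    have hratio : dist x y / s ≤ 2 / k := by
      rw [div_le_div_iff₀ hs_pos hk_pos, hs_def]
      nlinarith [dist_nonneg (x := x) (y := y)]
    have hη_le : η (dist x y / s) ≤ ε := by
      exact hη_mono.monotoneOn (div_nonneg dist_nonneg hs_pos.le) (le_of_lt h2k_pos) hratio
    have hfz : dist (f x) (f z) = m := by rw [hz_eq, hm_def]; exact hm_eq.symm
    rw [mem_closedBall, dist_comm]
    calc dist (f x) (f y) ≤ η (dist x y / s) * dist (f x) (f z) := hQSa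
    _ = η (dist x y / s) * m := by rw [hfz]
    _ ≤ ε * m := mul_le_mul_of_nonneg_right hη_le hm_pos.le
  · -- closedBall (f x) (2 ε m) ⊆ f '' closedBall x (k R)
    have h1 : closedBall (f x) (2 * (ε * m)) ⊆ ball (f x) m :=
      closedBall_subset_ball (by nlinarith [hε_le4, hm_pos])
    refine le_trans h1 (le_trans hball ?_)
    exact image_mono (le_trans ball_subset_closedBall (closedBall_subset_closedBall hskR))
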